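/- arXiv:math/0507101 — 3 statements merged into one kernel-verified Lean document; each statement's English description precedes it below -/
import Mathlib

section
/- Let X be the set of real embeddings σ : F → ℝ. The monoid O_F \ {0} acts on Ô_F^♮ × {±1}^X by a·(x, ε) = (a·x, (sign(σ(a)))_σ · ε), and the group F^× acts on A_{f,F}^× × {±1}^X by the same formula. Then the inclusion Ô_F^♮ × {±1}^X ⊆ A_{f,F}^× × {±1}^X induces a bijection from the quotient of Ô_F^♮ × {±1}^X by the equivalence relation generated by (x, ε) ∼ a·(x, ε) for a ∈ O_F \ {0}, onto the quotient of A_{f,F}^× × {±1}^X by the action of F^×. -/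
open IsDedekindDomain IsDedekindDomain.HeightOneSpectrum NumberField

noncomputable section

variable (F : Type) [Field F] [NumberField F]

/-- The finite adele ring of the number field `F`. -/
abbrev AF := FiniteAdeleRing (𝓞 F) F

/-- A finite adele is integral if all its components are integral. -/
def IsIntegralAdele (x : AF F) : Prop :=
  ∀ v : HeightOneSpectrum (𝓞 F), x v ∈ v.adicCompletionIntegers F

/-- Ô_F^♮, the submonoid of A_{f,F}^× of integral finite ideles. -/
def natSub : Submonoid (AF F)ˣ where
  carrier := {u | IsIntegralAdele F (u : AF F)}
  one_mem' := fun v => one_mem _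
  mul_mem' := fun ha hb v => mul_mem (ha v) (hb v)

/-- The diagonal embedding of F^× into the finite ideles of F. -/
def diagF : Fˣ →* (AF F)ˣ := Units.map (algebraMap F (AF F)).toMonoidHom

/-- The sign (as an element of {±1} = ℤˣ) of the image of `a` under a real embedding `σ`. -/
def signEmb (a : F) (σ : F →+* ℝ) : ℤˣ := if 0 < σ a then 1 else -1

/-- The relation on Ô_F^♮ × {±1}^X generated by the action of O_F \ {0}
(nonzero integers being encoded as units of F that are integral). -/
def relNat : (natSub F × ((F →+* ℝ) → ℤˣ)) → (natSub F × ((F →+* ℝ) → ℤˣ)) → Prop :=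
  fun p q => ∃ a : Fˣ, (∃ b : 𝓞 F, algebraMap (𝓞 F) F b = (a : F)) ∧
    (q.1 : (AF F)ˣ) = diagF F a * (p.1 : (AF F)ˣ) ∧
    q.2 = fun σ => signEmb F (a : F) σ * p.2 σ

/-- The orbit relation of the action of F^× on A_{f,F}^× × {±1}^X. -/
def relFull : ((AF F)ˣ × ((F →+* ℝ) → ℤˣ)) → ((AF F)ˣ × ((F →+* ℝ) → ℤˣ)) → Prop :=
  fun p q => ∃ a : Fˣ,
    q.1 = diagF F a * p.1 ∧ q.2 = fun σ => signEmb F (a : F) σ * p.2 σ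

set_option linter.unusedSectionVars false

variable {F}

lemma signEmb_mul (a b : F) (ha : a ≠ 0) (hb : b ≠ 0) (σ : F →+* ℝ) :
    signEmb F (a * b) σ = signEmb F a σ * signEmb F b σ := by
  have ha' : σ a ≠ 0 := (map_ne_zero σ).mpr ha
  have hb' : σ b ≠ 0 := (map_ne_zero σ).mpr hb
  unfold signEmb
  rw [map_mul]
  rcases ha'.lt_or_gt with h | h <;> rcases hb'.lt_or_gt with h' | h' <;>
    simp [mul_pos_iff, h, h', asymm h, asymm h']

lemma signEmb_inv (a : Fˣ) (σ : F →+* ℝ) :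
    signEmb F ((a⁻¹ : Fˣ) : F) σ = signEmb F (a : F) σ := by
  unfold signEmb
  rw [Units.val_inv_eq_inv_val, map_inv₀]
  simp [inv_pos]

lemma signEmb_one (σ : F →+* ℝ) : signEmb F 1 σ = 1 := by
  simp [signEmb]

lemma diag_int_mem (x : 𝓞 F) (v : HeightOneSpectrum (𝓞 F)) :
    (algebraMap F (AF F) (algebraMap (𝓞 F) F x)) v ∈ v.adicCompletionIntegers F := by
  have : algebraMap F (AF F) (algebraMap (𝓞 F) F x) v
      = (algebraMap (𝓞 F) F x : v.adicCompletion F) := rfl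
  rw [this]
  exact coe_mem_adicCompletionIntegers v x

lemma relFull_equiv : Equivalence (relFull F) := by
  constructor
  · intro p
    exact ⟨1, by simp, by funext σ; simp [signEmb_one]⟩
  · rintro p q ⟨a, h1, h2⟩
    refine ⟨a⁻¹, ?_, ?_⟩
    · rw [h1, map_inv]
      group
    · funext σ
      rw [signEmb_inv, h2]
      dsimp only
      rw [← mul_assoc, Int.units_mul_self, one_mul]
  · rintro p q r ⟨a, h1, h2⟩ ⟨b, h3, h4⟩
    refine ⟨b * a, ?_, ?_⟩
    · rw [h3, h1, map_mul, mul_assoc]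
    · funext σ
      rw [h4, h2]
      dsimp only
      rw [Units.val_mul, signEmb_mul _ _ (Units.ne_zero b) (Units.ne_zero a), mul_assoc]

/-- The inclusion Ô_F^♮ × {±1}^X ⊆ A_{f,F}^× × {±1}^X induces a bijection
(O_F \ {0})\(Ô_F^♮ × {±1}^X) ≅ F^×\(A_{f,F}^× × {±1}^X). -/
theorem quotient_natSub_pm_bijective :
    Function.Bijective
      (Quot.lift
        (fun p : natSub F × ((F →+* ℝ) → ℤˣ) =>
          Quot.mk (relFull F) ((p.1 : (AF F)ˣ), p.2))
        (fun p q h => by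
          obtain ⟨a, -, h1, h2⟩ := h
          exact Quot.sound ⟨a, h1, h2⟩) :
        Quot (relNat F) → Quot (relFull F)) := by
  constructor
  · -- injectivity
    have key : ∀ p q : natSub F × ((F →+* ℝ) → ℤˣ),
        Quot.mk (relFull F) ((p.1 : (AF F)ˣ), p.2) = Quot.mk (relFull F) ((q.1 : (AF F)ˣ), q.2) →
        Quot.mk (relNat F) p = Quot.mk (relNat F) q := by
      intro p q h
      rw [Quot.eq, (relFull_equiv).eqvGen_iff] at h
      obtain ⟨a, h1, h2⟩ := h
      dsimp only at h1 h2
      obtain ⟨b, c, hc, hbc⟩ := IsFractionRing.div_surjective (A := 𝓞 F) (a : F)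
      have hc0 : algebraMap (𝓞 F) F c ≠ 0 :=
        IsFractionRing.to_map_ne_zero_of_mem_nonZeroDivisors hc
      have hb0 : algebraMap (𝓞 F) F b ≠ 0 := by
        intro h0
        rw [h0, zero_div] at hbc
        exact Units.ne_zero a hbc.symm
      set bb : Fˣ := Units.mk0 _ hb0 with hbb
      set cc : Fˣ := Units.mk0 _ hc0 with hcc
      have habc : cc * a = bb := by
        apply Units.ext
        have : algebraMap (𝓞 F) F b = (a : F) * algebraMap (𝓞 F) F c :=
          (div_eq_iff hc0).mp hbc
        simp only [hbb, hcc, Units.val_mul, Units.val_mk0]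
        rw [this, mul_comm]
      have hr : IsIntegralAdele F ((diagF F bb * (p.1 : (AF F)ˣ) : (AF F)ˣ) : AF F) := by
        intro v
        exact mul_mem (diag_int_mem b v) (p.1.2 v)
      set r : natSub F × ((F →+* ℝ) → ℤˣ) :=
        (⟨diagF F bb * (p.1 : (AF F)ˣ), hr⟩, fun σ => signEmb F (bb : F) σ * p.2 σ) with hrdef
      have h1' : relNat F p r := ⟨bb, ⟨b, rfl⟩, rfl, rfl⟩
      have h2' : relNat F q r := by
        refine ⟨cc, ⟨c, rfl⟩, ?_, ?_⟩
        · show diagF F bb * (p.1 : (AF F)ˣ) = diagF F cc * (q.1 : (AF F)ˣ)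
          rw [h1, ← mul_assoc, ← map_mul, habc]
        · funext σ
          show signEmb F (bb : F) σ * p.2 σ = signEmb F (cc : F) σ * q.2 σ
          rw [h2]
          dsimp only
          rw [← mul_assoc, ← signEmb_mul _ _ (Units.ne_zero cc) (Units.ne_zero a)]
          congr 1
          rw [← Units.val_mul, habc]
      exact (Quot.sound h1').trans (Quot.sound h2').symm
    intro x y
    induction x using Quot.ind with
    | _ p =>
      induction y using Quot.ind with
      | _ q => exact key p q
  · -- surjectivity
    intro y
    induction y using Quot.ind with
    | _ p =>
      obtain ⟨u, ε⟩ := p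
      obtain ⟨d, hint⟩ : ∃ d : nonZeroDivisors (𝓞 F), ∀ v, ((u : AF F) * algebraMap (𝓞 F) (AF F) (d : 𝓞 F)) v
          ∈ v.adicCompletionIntegers F := by
        classical
        have hfin : {v : HeightOneSpectrum (𝓞 F) | (u : AF F) v ∉ v.adicCompletionIntegers F}.Finite :=
          Filter.eventually_cofinite.mp (u : AF F).2
        choose b hb hbv using fun v : HeightOneSpectrum (𝓞 F) =>
          adicCompletion.mul_nonZeroDivisor_mem_adicCompletionIntegers (K := F) v ((u : AF F) v)
        refine ⟨⟨∏ w ∈ hfin.toFinset, b w, prod_mem fun w _ => hb w⟩, fun v => ?_⟩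
        have hR : ∀ r : 𝓞 F, algebraMap (𝓞 F) (v.adicCompletion F) r ∈ v.adicCompletionIntegers F :=
          fun r => coe_mem_adicCompletionIntegers v r
        have e : ((u : AF F) * algebraMap (𝓞 F) (AF F) (∏ w ∈ hfin.toFinset, b w)) v
            = (u : AF F) v * algebraMap (𝓞 F) (v.adicCompletion F) (∏ w ∈ hfin.toFinset, b w) := rfl
        show ((u : AF F) * algebraMap (𝓞 F) (AF F) (∏ w ∈ hfin.toFinset, b w)) v ∈ _
        rw [e]
        by_cases hv : v ∈ hfin.toFinset
        · rw [← Finset.mul_prod_erase _ _ hv, map_mul, ← mul_assoc]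
          refine mul_mem ?_ (hR _)
          convert hbv v using 2
          rfl
        · have : (u : AF F) v ∈ v.adicCompletionIntegers F := by simpa using hv
          exact mul_mem this (hR _)
      have hd0 : algebraMap (𝓞 F) F (d : 𝓞 F) ≠ 0 :=
        IsFractionRing.to_map_ne_zero_of_mem_nonZeroDivisors d.2
      set dd : Fˣ := Units.mk0 _ hd0 with hdd
      have hw : IsIntegralAdele F ((diagF F dd * u : (AF F)ˣ) : AF F) := by
        intro v
        have hcomm : ((diagF F dd * u : (AF F)ˣ) : AF F)
            = (u : AF F) * algebraMap (𝓞 F) (AF F) (d : 𝓞 F) := by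
          rw [Units.val_mul, mul_comm]
          congr 1
        rw [hcomm]
        exact hint v
      exact ⟨Quot.mk _ (⟨⟨diagF F dd * u, hw⟩, fun σ => signEmb F (dd : F) σ * ε σ⟩),
        (Quot.sound ⟨dd, rfl, rfl⟩).symm⟩
end
end

section
/- Let F be a totally real number field and let M₂(Ô_F)^♮ := {m ∈ M₂(A_{f,F}) : m is invertible in the ring M₂(A_{f,F}) and every entry of m lies in Ô_F}, a multiplicative submonoid of GL₂(A_{f,F}). Then the inclusion induces a bijection from the quotient of M₂(Ô_F)^♮ by the equivalence relation generated by m ∼ a·m for a ∈ O_F \ {0} (acting by scalar multiplication), onto the quotient of GL₂(A_{f,F}) by the subgroup of scalar matrices with entries in the diagonally embedded F^×. -/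
open IsDedekindDomain IsDedekindDomain.HeightOneSpectrum NumberField

set_option synthInstance.maxHeartbeats 400000
set_option maxHeartbeats 1000000

noncomputable section

variable (F : Type) [Field F] [NumberField F]

/-- Evaluation of a finite adele at a finite place, as a ring homomorphism. -/
def evalAt (v : HeightOneSpectrum (𝓞 F)) : AF F →+* v.adicCompletion F where
  toFun x := x v
  map_one' := rfl
  map_mul' _ _ := rfl
  map_zero' := rfl
  map_add' _ _ := rfl

/-- 2×2 matrices over the finite adele ring. -/
abbrev M2A := Matrix (Fin 2) (Fin 2) (AF F)

/-- M₂(Ô_F)^♮: the submonoid of GL₂(A_{f,F}) of invertible matrices all of whose entries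
are integral. -/
def m2Nat : Submonoid (M2A F)ˣ where
  carrier := {m | ∀ i j, IsIntegralAdele F ((m : M2A F) i j)}
  one_mem' := by
    intro i j v
    show evalAt F v (((1 : (M2A F)ˣ) : M2A F) i j) ∈ _
    rw [Units.val_one, Matrix.one_apply]
    split_ifs
    · rw [map_one]; exact one_mem _
    · rw [map_zero]; exact zero_mem _
  mul_mem' := by
    intro a b ha hb i j v
    show evalAt F v (((a * b : (M2A F)ˣ) : M2A F) i j) ∈ _
    rw [Units.val_mul, Matrix.mul_apply, map_sum]
    exact sum_mem fun k _ => mul_mem (ha i k v) (hb k j v)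

/-- The scalar matrix attached to an element of F^×, as an element of GL₂(A_{f,F}). -/
def scalarUnit : Fˣ →* (M2A F)ˣ :=
  Units.map ((Matrix.scalar (Fin 2)).comp (algebraMap F (AF F))).toMonoidHom

/-- The relation on M₂(Ô_F)^♮ generated by scalar multiplication by O_F \ {0}
(nonzero integers being encoded as units of F that are integral over ℤ). -/
def relM2Nat : m2Nat F → m2Nat F → Prop := fun p q =>
  ∃ a : Fˣ, (∃ b : 𝓞 F, algebraMap (𝓞 F) F b = (a : F)) ∧
    (q : (M2A F)ˣ) = scalarUnit F a * (p : (M2A F)ˣ)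

/-- The orbit relation on GL₂(A_{f,F}) of the subgroup of scalar matrices with entries in
the diagonally embedded F^×. -/
def relGL2 : (M2A F)ˣ → (M2A F)ˣ → Prop := fun g g' =>
  ∃ a : Fˣ, g' = scalarUnit F a * g


section Helpers

variable {F}

lemma isIntegralAdele_algebraMap (b : 𝓞 F) :
    IsIntegralAdele F (algebraMap F (AF F) (algebraMap (𝓞 F) F b)) := by
  intro v
  have h : (algebraMap F (AF F) (algebraMap (𝓞 F) F b)) v =
      (algebraMap (𝓞 F) F b : v.adicCompletion F) := rfl
  rw [h, mem_adicCompletionIntegers, valuedAdicCompletion_eq_valuation',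
    valuation_of_algebraMap]
  exact v.intValuation_le_one b

lemma IsIntegralAdele.mul {x y : AF F} (hx : IsIntegralAdele F x) (hy : IsIntegralAdele F y) :
    IsIntegralAdele F (x * y) := by
  intro v
  show evalAt F v (x * y) ∈ _
  rw [map_mul]
  exact mul_mem (hx v) (hy v)

lemma scalarUnit_val (a : Fˣ) :
    ((scalarUnit F a : (M2A F)ˣ) : M2A F) =
      Matrix.scalar (Fin 2) (algebraMap F (AF F) (a : F)) := rfl

lemma scalarUnit_mul_apply (a : Fˣ) (g : (M2A F)ˣ) (i j : Fin 2) :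
    ((scalarUnit F a * g : (M2A F)ˣ) : M2A F) i j =
      algebraMap F (AF F) (a : F) * (g : M2A F) i j := by
  rw [Units.val_mul, scalarUnit_val]
  simp [Matrix.scalar, Matrix.diagonal_mul]

lemma relGL2_equivalence : Equivalence (relGL2 F) where
  refl g := ⟨1, by rw [map_one, one_mul]⟩
  symm := by
    rintro g g' ⟨a, rfl⟩
    exact ⟨a⁻¹, by rw [← mul_assoc, ← map_mul, inv_mul_cancel, map_one, one_mul]⟩
  trans := by
    rintro g g' g'' ⟨a, rfl⟩ ⟨b, rfl⟩
    exact ⟨b * a, by rw [map_mul, mul_assoc]⟩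

lemma scalarUnit_mul_mem_m2Nat (b : 𝓞 F) (u : Fˣ) (hu : (u : F) = algebraMap (𝓞 F) F b)
    (g : (M2A F)ˣ) (hg : g ∈ m2Nat F) : scalarUnit F u * g ∈ m2Nat F := by
  intro i j
  rw [scalarUnit_mul_apply, hu]
  exact (isIntegralAdele_algebraMap b).mul (hg i j)

lemma isIntegralAdele_algebraMap' (b : 𝓞 F) :
    IsIntegralAdele F (algebraMap (𝓞 F) (AF F) b) := by
  rw [IsScalarTower.algebraMap_apply (𝓞 F) F (AF F)]
  exact isIntegralAdele_algebraMap b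

lemma IsIntegralAdele.prod {ι : Type*} {s : Finset ι} {f : ι → AF F}
    (h : ∀ k ∈ s, IsIntegralAdele F (f k)) : IsIntegralAdele F (∏ k ∈ s, f k) := by
  intro v
  show evalAt F v _ ∈ _
  rw [map_prod]
  exact prod_mem (fun k hk => h k hk v)

lemma exists_nonZeroDivisor_mul_isIntegralAdele (x : AF F) :
    ∃ b : nonZeroDivisors (𝓞 F), IsIntegralAdele F (x * algebraMap (𝓞 F) (AF F) b) := by
  have hfin : {v : HeightOneSpectrum (𝓞 F) | ¬ x v ∈ v.adicCompletionIntegers F}.Finite :=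
    Filter.eventually_cofinite.mp x.2
  choose c hc hcx using fun v : HeightOneSpectrum (𝓞 F) =>
    adicCompletion.mul_nonZeroDivisor_mem_adicCompletionIntegers (K := F) v (x v)
  refine ⟨∏ v ∈ hfin.toFinset, ⟨c v, hc v⟩, ?_⟩
  intro w
  show evalAt F w (x * algebraMap (𝓞 F) (AF F) _) ∈ w.adicCompletionIntegers F
  rw [map_mul, Submonoid.coe_finset_prod, map_prod, map_prod]
  by_cases hw : w ∈ hfin.toFinset
  · classical
    rw [← Finset.mul_prod_erase _ _ hw, ← mul_assoc]
    refine mul_mem ?_ (prod_mem fun v _ => isIntegralAdele_algebraMap' _ w)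
    exact hcx w
  · rw [Set.Finite.mem_toFinset, Set.mem_setOf_eq, not_not] at hw
    exact mul_mem hw (prod_mem fun v _ => isIntegralAdele_algebraMap' _ w)

end Helpers

set_option maxHeartbeats 4000000 in
/-- For a totally real number field F, the inclusion M₂(Ô_F)^♮ ⊆ GL₂(A_{f,F}) induces a
bijection (O_F \ {0})\M₂(Ô_F)^♮ ≅ F^×\GL₂(A_{f,F}). -/
theorem quotient_m2Nat_bijective
    (htotallyreal : ∀ φ : F →+* ℂ, NumberField.ComplexEmbedding.IsReal φ) :
    Function.Bijective
      (Quot.lift (fun p : m2Nat F => Quot.mk (relGL2 F) (p : (M2A F)ˣ))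
        (fun p q h => by
          obtain ⟨a, -, h1⟩ := h
          exact Quot.sound ⟨a, h1⟩) :
        Quot (relM2Nat F) → Quot (relGL2 F)) := by
  
  constructor
  · -- injectivity
    intro x y h
    obtain ⟨p, rfl⟩ := Quot.exists_rep x
    obtain ⟨q, rfl⟩ := Quot.exists_rep y
    -- h : Quot.mk (relGL2 F) p = Quot.mk (relGL2 F) q
    replace h := Quot.eqvGen_exact h
    rw [(relGL2_equivalence (F := F)).eqvGen_iff] at h
    obtain ⟨a, ha⟩ := h
    obtain ⟨xn, yn, hy, hxy⟩ := IsFractionRing.div_surjective (A := 𝓞 F) (a : F)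
    have hyne : algebraMap (𝓞 F) F yn ≠ 0 :=
      IsFractionRing.to_map_ne_zero_of_mem_nonZeroDivisors hy
    have hane : (a : F) ≠ 0 := a.ne_zero
    have hxne : algebraMap (𝓞 F) F xn ≠ 0 := by
      intro h0
      rw [h0, zero_div] at hxy
      exact hane hxy.symm
    set xu : Fˣ := Units.mk0 _ hxne with hxu
    set yu : Fˣ := Units.mk0 _ hyne with hyu
    have key : yu * a = xu := by
      ext
      show (yu : F) * (a : F) = (xu : F)
      rw [← hxy]
      field_simp
      rfl
    have hP : scalarUnit F xu * (p : (M2A F)ˣ) ∈ m2Nat F :=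
      scalarUnit_mul_mem_m2Nat xn xu rfl _ p.2
    have hQ : scalarUnit F yu * (q : (M2A F)ˣ) ∈ m2Nat F :=
      scalarUnit_mul_mem_m2Nat yn yu rfl _ q.2
    have hPQ : (⟨scalarUnit F xu * (p : (M2A F)ˣ), hP⟩ : m2Nat F) =
        ⟨scalarUnit F yu * (q : (M2A F)ˣ), hQ⟩ := by
      ext : 1
      show scalarUnit F xu * (p : (M2A F)ˣ) = scalarUnit F yu * (q : (M2A F)ˣ)
      rw [ha, ← mul_assoc, ← map_mul, key]
    have h1 : Quot.mk (relM2Nat F) p =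
        Quot.mk (relM2Nat F) ⟨scalarUnit F xu * (p : (M2A F)ˣ), hP⟩ :=
      Quot.sound ⟨xu, ⟨xn, rfl⟩, rfl⟩
    have h2 : Quot.mk (relM2Nat F) q =
        Quot.mk (relM2Nat F) ⟨scalarUnit F yu * (q : (M2A F)ˣ), hQ⟩ :=
      Quot.sound ⟨yu, ⟨yn, rfl⟩, rfl⟩
    rw [h1, h2, hPQ]
  · -- surjectivity
    refine Quot.ind (fun g => ?_)
    choose b hbc using fun k : Fin 2 × Fin 2 =>
      exists_nonZeroDivisor_mul_isIntegralAdele ((g : M2A F) k.1 k.2)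
    set b' : Fin 2 × Fin 2 → 𝓞 F := fun k => ((b k : 𝓞 F)) with hb'
    have hint : ∀ k : Fin 2 × Fin 2,
        IsIntegralAdele F ((g : M2A F) k.1 k.2 * algebraMap (𝓞 F) (AF F) (b' k)) := by
      intro k v
      exact hbc k v
    set r : 𝓞 F := ∏ k : Fin 2 × Fin 2, b' k with hr
    have hrmem : r ∈ nonZeroDivisors (𝓞 F) := prod_mem (fun k _ => (b k).2)
    have hrne : algebraMap (𝓞 F) F r ≠ 0 :=
      IsFractionRing.to_map_ne_zero_of_mem_nonZeroDivisors hrmem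
    set u : Fˣ := Units.mk0 _ hrne with hu
    have hmem : scalarUnit F u * g ∈ m2Nat F := by
      intro i j
      rw [scalarUnit_mul_apply]
      show IsIntegralAdele F (algebraMap F (AF F) (algebraMap (𝓞 F) F r) * (g : M2A F) i j)
      have hsplit : algebraMap F (AF F) (algebraMap (𝓞 F) F r) * (g : M2A F) i j =
          ((g : M2A F) i j * algebraMap (𝓞 F) (AF F) (b' (i, j))) *
            ∏ k ∈ Finset.univ.erase (i, j), algebraMap (𝓞 F) (AF F) (b' k) := by
        have h1 : algebraMap F (AF F) (algebraMap (𝓞 F) F r) =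
            ∏ k : Fin 2 × Fin 2, algebraMap (𝓞 F) (AF F) (b' k) := by
          rw [hr, map_prod, map_prod]
          refine Finset.prod_congr rfl (fun k _ => ?_)
          rw [← IsScalarTower.algebraMap_apply]
        rw [h1, ← Finset.mul_prod_erase Finset.univ _ (Finset.mem_univ (i, j)),
          mul_comm, ← mul_assoc]
      rw [hsplit]
      exact (hint (i, j)).mul
        (IsIntegralAdele.prod (fun k _ => isIntegralAdele_algebraMap' (b' k)))
    refine ⟨Quot.mk _ ⟨scalarUnit F u * g, hmem⟩, ?_⟩
    show Quot.mk (relGL2 F) (scalarUnit F u * g) = Quot.mk (relGL2 F) g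
    exact Quot.sound ⟨u⁻¹, by rw [← mul_assoc, ← map_mul, inv_mul_cancel, map_one, one_mul]⟩
end
end

section
/- Let m be a nonzero ideal of O_F, let K(m) := {u ∈ Ô_F^× : u − 1 ∈ m·Ô_F} and K^♮(m) := {x ∈ Ô_F^♮ : x − 1 ∈ m·Ô_F}, where m·Ô_F is the ideal of Ô_F generated by the image of m. Then the map x ↦ I(x) induces an isomorphism of multiplicative monoids from the quotient monoid K(m)\K^♮(m) onto the monoid of nonzero ideals J of O_F that are coprime to m (i.e. J + m = O_F); in particular the induced map K(m)\K^♮(m) → Ô_F^×\Ô_F^♮ is injective. -/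
/-!
Ray class monoids: for a nonzero ideal m of O_F, the map x ↦ I(x) induces a monoid
isomorphism K(m)\K^♮(m) ≅ {nonzero ideals of O_F coprime to m}; in particular the induced
map K(m)\K^♮(m) → Ô_F^×\Ô_F^♮ is injective.
-/
open IsDedekindDomain IsDedekindDomain.HeightOneSpectrum NumberField

noncomputable section

variable (F : Type) [Field F] [NumberField F]

/-- Ô_F^×, the subgroup of A_{f,F}^× of ideles integral with integral inverse. -/
def unitsSub : Subgroup (AF F)ˣ where
  carrier := {u | IsIntegralAdele F (u : AF F) ∧ IsIntegralAdele F ((u⁻¹ : (AF F)ˣ) : AF F)}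
  one_mem' := ⟨fun v => one_mem _, fun v => one_mem _⟩
  mul_mem' := by
    rintro a b ⟨ha, ha'⟩ ⟨hb, hb'⟩
    exact ⟨fun v => mul_mem (ha v) (hb v), by
      rw [mul_inv_rev]; exact fun v => mul_mem (hb' v) (ha' v)⟩
  inv_mem' := by
    rintro a ⟨ha, ha'⟩
    exact ⟨ha', by rw [inv_inv]; exact ha⟩

/-- The ideal I(x) = {a ∈ O_F : v(a) ≥ v(x_v) for all finite places v} attached to a
finite adele x (additive valuations; multiplicatively, Valued.v ≤). -/
def idealOf (x : AF F) : Ideal (𝓞 F) where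
  carrier := {a | ∀ v : HeightOneSpectrum (𝓞 F),
    Valued.v (algebraMap (𝓞 F) (v.adicCompletion F) a) ≤ Valued.v (x v)}
  zero_mem' := fun v => by
    rw [RingHom.map_zero, Valuation.map_zero]; exact zero_le'
  add_mem' := fun {a b} ha hb v => by
    rw [RingHom.map_add]
    exact le_trans (Valued.v.map_add _ _) (max_le (ha v) (hb v))
  smul_mem' := fun c a ha v => by
    rw [smul_eq_mul, RingHom.map_mul, Valuation.map_mul]
    calc Valued.v (algebraMap (𝓞 F) (v.adicCompletion F) c) *
        Valued.v (algebraMap (𝓞 F) (v.adicCompletion F) a)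
        ≤ 1 * Valued.v (x v) := by
          refine mul_le_mul' ?_ (ha v)
          have := coe_mem_adicCompletionIntegers (K := F) v c
          rwa [mem_adicCompletionIntegers] at this
      _ = Valued.v (x v) := one_mul _

/-- Ô_F, the subring of integral finite adeles of A_{f,F}. -/
def intSubring : Subring (AF F) where
  carrier := {x | IsIntegralAdele F x}
  one_mem' := fun v => one_mem _
  mul_mem' := fun ha hb v => mul_mem (ha v) (hb v)
  zero_mem' := fun v => zero_mem _
  add_mem' := fun ha hb v => add_mem (ha v) (hb v)
  neg_mem' := fun ha v => neg_mem (ha v)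

/-- The natural ring homomorphism O_F → Ô_F. -/
def toInt : 𝓞 F →+* intSubring F :=
  (algebraMap (𝓞 F) (AF F)).codRestrict (intSubring F)
    (fun a v => IsDedekindDomain.HeightOneSpectrum.coe_mem_adicCompletionIntegers v a)

/-- The ideal m·Ô_F of Ô_F generated by the image of the ideal m of O_F. -/
def congIdeal (m : Ideal (𝓞 F)) : Ideal (intSubring F) := Ideal.map (toInt F) m

/-- Membership in K^♮(m) = {x ∈ Ô_F^♮ : x − 1 ∈ m·Ô_F}. -/
def MemKNat (m : Ideal (𝓞 F)) (x : (AF F)ˣ) : Prop :=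
  ∃ hx : (x : AF F) ∈ intSubring F,
    ((⟨(x : AF F), hx⟩ : intSubring F) - 1) ∈ congIdeal F m

/-- Membership in K(m) = {u ∈ Ô_F^× : u − 1 ∈ m·Ô_F}. -/
def MemK (m : Ideal (𝓞 F)) (u : (AF F)ˣ) : Prop :=
  u ∈ unitsSub F ∧ MemKNat F m u

section Aux
variable {F : Type} [Field F] [NumberField F]

open Multiplicative in
lemma AF.mul_apply (x y : AF F) (v : HeightOneSpectrum (𝓞 F)) : (x * y) v = x v * y v := rfl

lemma AF.one_apply (v : HeightOneSpectrum (𝓞 F)) : (1 : AF F) v = 1 := rfl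

lemma AF.sub_apply (x y : AF F) (v : HeightOneSpectrum (𝓞 F)) : (x - y) v = x v - y v := rfl

lemma AF.algebraMap_apply (a : 𝓞 F) (v : HeightOneSpectrum (𝓞 F)) :
    (algebraMap (𝓞 F) (AF F) a) v = algebraMap (𝓞 F) (v.adicCompletion F) a := rfl

lemma val_algebraMap (v : HeightOneSpectrum (𝓞 F)) (a : 𝓞 F) :
    Valued.v (algebraMap (𝓞 F) (v.adicCompletion F) a) = v.intValuation a := by
  have : algebraMap (𝓞 F) (v.adicCompletion F) a
      = ((algebraMap (𝓞 F) F a : F) : v.adicCompletion F) := rfl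
  rw [this, valuedAdicCompletion_eq_valuation', valuation_of_algebraMap]

end Aux
section Aux2
variable {F : Type} [Field F] [NumberField F]

lemma unit_apply_mul_inv (x : (AF F)ˣ) (v : HeightOneSpectrum (𝓞 F)) :
    (x : AF F) v * ((x⁻¹ : (AF F)ˣ) : AF F) v = 1 :=
  congrArg (fun z : AF F => z v) (Units.mul_inv x)

lemma unit_val_mul_inv (x : (AF F)ˣ) (v : HeightOneSpectrum (𝓞 F)) :
    Valued.v ((x : AF F) v) * Valued.v (((x⁻¹ : (AF F)ˣ) : AF F) v) = 1 := by
  rw [← Valuation.map_mul, unit_apply_mul_inv, Valuation.map_one]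

lemma unit_val_ne_zero (x : (AF F)ˣ) (v : HeightOneSpectrum (𝓞 F)) :
    Valued.v ((x : AF F) v) ≠ 0 := by
  intro h
  have := unit_val_mul_inv x v
  rw [h, zero_mul] at this
  exact zero_ne_one this

lemma unitsSub_val_eq_one {u : (AF F)ˣ} (hu : u ∈ unitsSub F) (v : HeightOneSpectrum (𝓞 F)) :
    Valued.v ((u : AF F) v) = 1 := by
  obtain ⟨h1, h2⟩ := hu
  have h1v := h1 v
  have h2v := h2 v
  rw [mem_adicCompletionIntegers] at h1v h2v
  have hmul := unit_val_mul_inv u v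
  refine le_antisymm h1v ?_
  calc (1 : WithZero (Multiplicative ℤ)) = Valued.v ((u : AF F) v) *
        Valued.v (((u⁻¹ : (AF F)ˣ) : AF F) v) := hmul.symm
    _ ≤ Valued.v ((u : AF F) v) * 1 := mul_le_mul_right h2v _
    _ = Valued.v ((u : AF F) v) := mul_one _

lemma val_eq_one_mem_unitsSub {u : (AF F)ˣ}
    (h : ∀ v : HeightOneSpectrum (𝓞 F), Valued.v ((u : AF F) v) = 1) : u ∈ unitsSub F := by
  constructor
  · intro v; rw [mem_adicCompletionIntegers, h v]
  · intro v
    rw [mem_adicCompletionIntegers]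
    have hmul := unit_val_mul_inv u v
    rw [h v, one_mul] at hmul
    rw [hmul]

/-- All but finitely many components of an idele have valuation one. -/
lemma unit_val_finite (x : (AF F)ˣ) :
    {v : HeightOneSpectrum (𝓞 F) | Valued.v ((x : AF F) v) ≠ 1}.Finite := by
  have hx := (x : AF F).2
  have hxi := ((x⁻¹ : (AF F)ˣ) : AF F).2
  rw [Filter.eventually_cofinite] at hx hxi
  refine Set.Finite.subset (hx.union hxi) ?_
  intro v hv
  simp only [Set.mem_union, Set.mem_setOf_eq]
  by_contra hcon
  push_neg at hcon
  obtain ⟨ha', hb'⟩ := hcon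
  have ha := mem_adicCompletionIntegers (𝓞 F) F v |>.mp ha'
  have hb := mem_adicCompletionIntegers (𝓞 F) F v |>.mp hb'
  apply hv
  refine le_antisymm ha ?_
  calc (1 : WithZero (Multiplicative ℤ)) = Valued.v ((x : AF F) v) *
        Valued.v (((x⁻¹ : (AF F)ˣ) : AF F) v) := (unit_val_mul_inv x v).symm
    _ ≤ Valued.v ((x : AF F) v) * 1 := mul_le_mul_right hb _
    _ = _ := mul_one _

end Aux2
section Aux3
variable {F : Type} [Field F] [NumberField F]

open Multiplicative

lemma HOS.injective_asIdeal : Function.Injective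
    (fun v : HeightOneSpectrum (𝓞 F) => v.asIdeal) := by
  intro a b h
  cases a; cases b; simpa using h

lemma exists_expo {x : (AF F)ˣ} (hx : IsIntegralAdele F (x : AF F)) :
    ∃ n : HeightOneSpectrum (𝓞 F) → ℕ,
      (∀ v, Valued.v ((x : AF F) v) =
        ((ofAdd (-(n v : ℤ)) : Multiplicative ℤ) : WithZero (Multiplicative ℤ))) ∧
      {v | n v ≠ 0}.Finite := by
  have key : ∀ v : HeightOneSpectrum (𝓞 F), ∃ k : ℕ, Valued.v ((x : AF F) v) =
      ((ofAdd (-(k : ℤ)) : Multiplicative ℤ) : WithZero (Multiplicative ℤ)) := by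
    intro v
    have h0 := unit_val_ne_zero x v
    have h1 : Valued.v ((x : AF F) v) ≤ 1 := hx v
    obtain ⟨t, ht⟩ := WithZero.ne_zero_iff_exists.mp h0
    refine ⟨(-(toAdd t)).toNat, ?_⟩
    rw [← ht] at h1 ⊢
    rw [← WithZero.coe_one, WithZero.coe_le_coe] at h1
    have htle : toAdd t ≤ 0 := by
      have := Multiplicative.toAdd_le.mpr h1
      simpa using this
    rw [WithZero.coe_inj]
    rw [Int.toNat_of_nonneg (by omega), neg_neg, ofAdd_toAdd]
  choose n hn using key
  refine ⟨n, hn, Set.Finite.subset (unit_val_finite x) ?_⟩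
  intro v hv
  simp only [Set.mem_setOf_eq] at hv ⊢
  rw [hn v]
  intro hcon
  rw [← WithZero.coe_one, WithZero.coe_inj] at hcon
  have : -(n v : ℤ) = 0 := by
    have := congrArg toAdd hcon
    simpa using this
  omega

lemma prime_pow_finprod_dvd (n : HeightOneSpectrum (𝓞 F) → ℕ) (hfin : {v | n v ≠ 0}.Finite)
    (I : Ideal (𝓞 F)) (h : ∀ v, v.asIdeal ^ n v ∣ I) :
    (∏ᶠ v, v.asIdeal ^ n v) ∣ I := by
  have hsub : (Function.mulSupport fun v : HeightOneSpectrum (𝓞 F) => v.asIdeal ^ n v)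
      ⊆ ↑hfin.toFinset := by
    intro v hv
    rw [Function.mem_mulSupport] at hv
    simp only [Finset.coe_sort_coe, Set.Finite.coe_toFinset, Set.mem_setOf_eq]
    intro h0
    rw [h0, pow_zero] at hv
    exact hv rfl
  rw [finprod_eq_prod_of_mulSupport_subset _ hsub]
  refine Finset.prod_dvd_of_coprime ?_ (fun v _ => h v)
  intro a _ b _ hab
  have : IsCoprime a.asIdeal b.asIdeal :=
    Ideal.isCoprime_iff_sup_eq.mpr (Ideal.IsMaximal.coprime_of_ne (HeightOneSpectrum.isMaximal a)
      (HeightOneSpectrum.isMaximal b) (fun hc => hab (HOS.injective_asIdeal hc)))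
  exact this.pow

lemma mem_finprod_iff {n : HeightOneSpectrum (𝓞 F) → ℕ} (hfin : {v | n v ≠ 0}.Finite)
    (a : 𝓞 F) : a ∈ (∏ᶠ v, v.asIdeal ^ n v) ↔ ∀ v, v.intValuation a ≤
      ((ofAdd (-(n v : ℤ)) : Multiplicative ℤ) : WithZero (Multiplicative ℤ)) := by
  constructor
  · intro ha v
    show v.intValuation a ≤ WithZero.exp (-(n v : ℤ))
    rw [intValuation_le_pow_iff_dvd]
    refine dvd_trans ?_ (Ideal.dvd_span_singleton.2 ha)
    by_cases h0 : n v = 0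
    · rw [h0, pow_zero]; exact one_dvd _
    · have hsub : (Function.mulSupport fun v : HeightOneSpectrum (𝓞 F) => v.asIdeal ^ n v)
          ⊆ ↑hfin.toFinset := by
        intro w hw
        rw [Function.mem_mulSupport] at hw
        simp only [Finset.coe_sort_coe, Set.Finite.coe_toFinset, Set.mem_setOf_eq]
        intro hh
        rw [hh, pow_zero] at hw
        exact hw rfl
      rw [finprod_eq_prod_of_mulSupport_subset _ hsub]
      exact Finset.dvd_prod_of_mem _ (by simp [Set.Finite.mem_toFinset, h0])
  · intro h
    rw [← Ideal.dvd_span_singleton]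
    refine prime_pow_finprod_dvd n hfin _ (fun v => ?_)
    rw [← intValuation_le_pow_iff_dvd]
    exact h v

lemma mem_idealOf_iff (x : AF F) (a : 𝓞 F) :
    a ∈ idealOf F x ↔ ∀ v, v.intValuation a ≤ Valued.v (x v) := by
  constructor
  · intro h v; have := h v; rwa [val_algebraMap] at this
  · intro h v; rw [val_algebraMap]; exact h v

lemma idealOf_eq_finprod {x : AF F} {n : HeightOneSpectrum (𝓞 F) → ℕ}
    (hfin : {v | n v ≠ 0}.Finite)
    (hval : ∀ v, Valued.v (x v) =
      ((ofAdd (-(n v : ℤ)) : Multiplicative ℤ) : WithZero (Multiplicative ℤ))) :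
    idealOf F x = ∏ᶠ v, v.asIdeal ^ n v := by
  ext a
  rw [mem_idealOf_iff, mem_finprod_iff hfin]
  exact forall_congr' (fun v => by rw [hval v])

lemma finprod_ne_bot {n : HeightOneSpectrum (𝓞 F) → ℕ} (hfin : {v | n v ≠ 0}.Finite) :
    (∏ᶠ v, v.asIdeal ^ n v) ≠ ⊥ := by
  have hsub : (Function.mulSupport fun v : HeightOneSpectrum (𝓞 F) => v.asIdeal ^ n v)
      ⊆ ↑hfin.toFinset := by
    intro w hw
    rw [Function.mem_mulSupport] at hw
    simp only [Finset.coe_sort_coe, Set.Finite.coe_toFinset, Set.mem_setOf_eq]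
    intro hh
    rw [hh, pow_zero] at hw
    exact hw rfl
  rw [finprod_eq_prod_of_mulSupport_subset _ hsub, ← Ideal.zero_eq_bot]
  rw [Finset.prod_ne_zero_iff]
  intro v _
  exact pow_ne_zero _ (by rw [Ideal.zero_eq_bot]; exact v.ne_bot)

end Aux3
section Aux4
set_option synthInstance.maxHeartbeats 400000
set_option maxHeartbeats 1000000
variable {F : Type} [Field F] [NumberField F]

set_option synthInstance.maxHeartbeats 1000000 in
lemma intSubring_coe_sub (z w : intSubring F) :
    ((z - w : intSubring F) : AF F) = (z : AF F) - (w : AF F) := rfl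

lemma intSubring_coe_one : (((1 : intSubring F)) : AF F) = 1 := rfl

lemma mem_congIdeal_of {m : Ideal (𝓞 F)} {z : intSubring F} (hz : z ∈ congIdeal F m) :
    ∀ v, ∃ a ∈ m, Valued.v ((z : AF F) v) ≤
      Valued.v (algebraMap (𝓞 F) (v.adicCompletion F) a) := by
  have hz' : z ∈ Submodule.span (intSubring F) ((toInt F) '' m) := hz
  refine Submodule.span_induction ?_ ?_ ?_ ?_ hz'
  · rintro w ⟨a, ham, rfl⟩ v
    exact ⟨a, ham, le_of_eq rfl⟩
  · intro v
    refine ⟨0, zero_mem m, ?_⟩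
    have h0 : ((0 : intSubring F) : AF F) v = 0 := rfl
    rw [h0, Valuation.map_zero]
    exact zero_le'
  · rintro w w' hw hw' ihw ihw' v
    obtain ⟨a, ham, hwa⟩ := ihw v
    obtain ⟨b, hbm, hwb⟩ := ihw' v
    have hadd : ((w + w' : intSubring F) : AF F) v = (w : AF F) v + (w' : AF F) v := rfl
    rcases le_total (Valued.v ((w : AF F) v)) (Valued.v ((w' : AF F) v)) with hc | hc
    · refine ⟨b, hbm, ?_⟩
      rw [hadd]
      exact le_trans (Valued.v.map_add _ _) (max_le (le_trans hc hwb) hwb)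
    · refine ⟨a, ham, ?_⟩
      rw [hadd]
      exact le_trans (Valued.v.map_add _ _) (max_le hwa (le_trans hc hwa))
  · rintro c w hw ihw v
    obtain ⟨a, ham, hwa⟩ := ihw v
    refine ⟨a, ham, ?_⟩
    have hsmul : ((c • w : intSubring F) : AF F) v = ((c : AF F) v) * ((w : AF F) v) := rfl
    rw [hsmul, Valuation.map_mul]
    calc Valued.v ((c : AF F) v) * Valued.v ((w : AF F) v)
        ≤ 1 * Valued.v (algebraMap (𝓞 F) (v.adicCompletion F) a) :=
          mul_le_mul' (c.2 v) hwa
      _ = _ := one_mul _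

lemma mem_congIdeal_of_forall {m : Ideal (𝓞 F)} (hm : m ≠ ⊥) (z : intSubring F)
    (h : ∀ v, ∃ a ∈ m, Valued.v ((z : AF F) v) ≤
      Valued.v (algebraMap (𝓞 F) (v.adicCompletion F) a)) :
    z ∈ congIdeal F m := by
  classical
  obtain ⟨S, hS⟩ := (IsNoetherian.noetherian m : m.FG)
  have hSne : S.Nonempty := by
    rcases S.eq_empty_or_nonempty with h0 | h1
    · exfalso; apply hm; rw [← hS, h0]; simp
    · exact h1
  have key : ∀ v, ∃ s ∈ S, Valued.v ((z : AF F) v) ≤ v.intValuation s := by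
    intro v
    obtain ⟨a, ham, hab⟩ := h v
    rw [val_algebraMap] at hab
    obtain ⟨s, hsS, hsup⟩ := Finset.exists_mem_eq_sup S hSne (fun s => v.intValuation s)
    refine ⟨s, hsS, le_trans hab ?_⟩
    rw [← hsup]
    have haspan : a ∈ Submodule.span (𝓞 F) (↑S : Set (𝓞 F)) := by rw [hS]; exact ham
    obtain ⟨f, -, hf⟩ := Submodule.mem_span_finset.mp haspan
    rw [← hf]
    refine Valuation.map_sum_le _ (fun i hi => ?_)
    calc v.intValuation (f i • i) = v.intValuation (f i) * v.intValuation i := by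
          rw [smul_eq_mul, Valuation.map_mul]
      _ ≤ 1 * v.intValuation i := mul_le_mul' (v.intValuation_le_one _) le_rfl
      _ = v.intValuation i := one_mul _
      _ ≤ S.sup (fun s => v.intValuation s) := Finset.le_sup hi
  choose sv hsvS hsvle using key
  -- the coefficient adeles
  set cc : 𝓞 F → ∀ v : HeightOneSpectrum (𝓞 F), v.adicCompletion F := fun s v =>
    if sv v = s ∧ (z : AF F) v ≠ 0 then
      ((z : AF F) v) * (algebraMap (𝓞 F) (v.adicCompletion F) s)⁻¹ else 0 with hcc
  have hccint : ∀ s v, Valued.v (cc s v) ≤ 1 := by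
    intro s v
    simp only [hcc]
    by_cases hcase : sv v = s ∧ (z : AF F) v ≠ 0
    · rw [if_pos hcase]
      obtain ⟨hsv, hzv⟩ := hcase
      subst hsv
      have hzvne : Valued.v ((z : AF F) v) ≠ 0 := by
        simpa using hzv
      have hsne : (v.intValuation (sv v) : WithZero (Multiplicative ℤ)) ≠ 0 :=
        fun hc => hzvne (le_antisymm (le_trans (hsvle v) (le_of_eq hc)) zero_le')
      rw [Valuation.map_mul, map_inv₀, val_algebraMap]
      calc Valued.v ((z : AF F) v) * (v.intValuation (sv v))⁻¹
          ≤ v.intValuation (sv v) * (v.intValuation (sv v))⁻¹ :=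
            mul_le_mul' (hsvle v) le_rfl
        _ = 1 := mul_inv_cancel₀ hsne
    · rw [if_neg hcase, Valuation.map_zero]; exact zero_le'
  have hccfin : ∀ s, (∀ᶠ v in Filter.cofinite, cc s v ∈ v.adicCompletionIntegers F) := by
    intro s
    rw [Filter.eventually_cofinite]
    have : {v : HeightOneSpectrum (𝓞 F) | cc s v ∉ v.adicCompletionIntegers F} = ∅ := by
      ext v
      simp only [Set.mem_setOf_eq, Set.mem_empty_iff_false, iff_false, not_not]
      rw [mem_adicCompletionIntegers]
      exact hccint s v
    rw [this]
    exact Set.finite_empty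
  set c : 𝓞 F → intSubring F := fun s => ⟨⟨cc s, hccfin s⟩, fun v => hccint s v⟩ with hc
  have hrep : z = ∑ s ∈ S, toInt F s * c s := by
    apply Subtype.ext
    apply FiniteAdeleRing.ext
    intro v
    have hsum : ((((∑ s ∈ S, toInt F s * c s : intSubring F)) : AF F) v)
        = ∑ s ∈ S, (algebraMap (𝓞 F) (v.adicCompletion F) s) * cc s v := by
      have h1 : (((∑ s ∈ S, toInt F s * c s : intSubring F)) : AF F)
          = ∑ s ∈ S, (algebraMap (𝓞 F) (AF F) s) * (⟨⟨cc s, hccfin s⟩, fun v => hccint s v⟩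
              : intSubring F) := by
        push_cast
        rfl
      rw [h1]
      have h2 : ∀ (T : Finset (𝓞 F)) (g : 𝓞 F → AF F), ((∑ s ∈ T, g s : AF F) v)
          = ∑ s ∈ T, (g s) v := by
        intro T g
        classical
        induction T using Finset.induction_on with
        | empty => rfl
        | insert _ _ hnot ih =>
            rw [Finset.sum_insert hnot, Finset.sum_insert hnot, ← ih]
            rfl
      rw [h2]
      rfl
    show (z : AF F) v = (((∑ s ∈ S, toInt F s * c s : intSubring F)) : AF F) v
    refine Eq.trans ?_ hsum.symm
    by_cases hzv : (z : AF F) v = 0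
    · rw [hzv]
      refine (Finset.sum_eq_zero ?_).symm
      intro s _
      simp only [hcc]
      rw [if_neg (by tauto), mul_zero]
    · rw [Finset.sum_eq_single (sv v)]
      · simp only [hcc]
        rw [if_pos (by refine ⟨?_, hzv⟩; first | rfl | trivial)]
        have hzvne : Valued.v ((z : AF F) v) ≠ 0 := by simpa using hzv
        have hsne : (v.intValuation (sv v) : WithZero (Multiplicative ℤ)) ≠ 0 :=
          fun hcon => hzvne (le_antisymm (by rw [← hcon]; exact hsvle v) zero_le')
        have halgne : algebraMap (𝓞 F) (v.adicCompletion F) (sv v) ≠ 0 := by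
          intro hcon
          apply hsne
          rw [← val_algebraMap, hcon, Valuation.map_zero]
        field_simp
      · intro s hsS hne
        simp only [hcc]
        rw [if_neg (by tauto), mul_zero]
      · intro hcon
        exact absurd (hsvS v) hcon
  rw [hrep]
  refine Ideal.sum_mem _ (fun s hsS => ?_)
  refine Ideal.mul_mem_right _ _ ?_
  refine Ideal.mem_map_of_mem (toInt F) ?_
  rw [← hS]
  exact Submodule.subset_span hsS

end Aux4
section Aux5
variable {F : Type} [Field F] [NumberField F]

lemma memKNat_sub_one_bound {m : Ideal (𝓞 F)} {x : (AF F)ˣ} (hx : MemKNat F m x)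
    (v : HeightOneSpectrum (𝓞 F)) :
    ∃ a ∈ m, Valued.v ((x : AF F) v - 1) ≤
      Valued.v (algebraMap (𝓞 F) (v.adicCompletion F) a) := by
  obtain ⟨hint, hsub⟩ := hx
  obtain ⟨a, ham, hle⟩ := mem_congIdeal_of hsub v
  refine ⟨a, ham, ?_⟩
  have hco : (((⟨((x : (AF F)ˣ) : AF F), hint⟩ : intSubring F) - 1 : intSubring F) : AF F) v
      = (x : AF F) v - 1 := rfl
  rwa [hco] at hle

lemma memKNat_val_eq_one {m : Ideal (𝓞 F)} {x : (AF F)ˣ} (hx : MemKNat F m x)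
    {v : HeightOneSpectrum (𝓞 F)} (hv : m ≤ v.asIdeal) : Valued.v ((x : AF F) v) = 1 := by
  obtain ⟨a, ham, hle⟩ := memKNat_sub_one_bound hx v
  rw [val_algebraMap] at hle
  have hlt : Valued.v ((x : AF F) v - 1) < 1 := by
    refine lt_of_le_of_lt hle ?_
    rw [intValuation_lt_one_iff_dvd, Ideal.dvd_span_singleton]
    exact hv ham
  have hne : Valued.v ((x : AF F) v - 1) < Valued.v (1 : v.adicCompletion F) := by
    rw [Valuation.map_one]; exact hlt
  have hres := Valuation.map_add_eq_of_lt_right Valued.v hne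
  rw [sub_add_cancel] at hres
  rw [hres, Valuation.map_one]

lemma exists_val_one_of_not_le {m : Ideal (𝓞 F)} {v : HeightOneSpectrum (𝓞 F)}
    (hv : ¬ m ≤ v.asIdeal) : ∃ a ∈ m, v.intValuation a = 1 := by
  obtain ⟨a, ham, hna⟩ := SetLike.not_le_iff_exists.mp hv
  refine ⟨a, ham, ?_⟩
  refine le_antisymm (v.intValuation_le_one a) ?_
  by_contra hlt
  push_neg at hlt
  rw [intValuation_apply] at hlt
  exact hna (Ideal.dvd_span_singleton.mp ((v.intValuation_lt_one_iff_dvd a).mp hlt))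

lemma unit_coe_mul (x u : (AF F)ˣ) : ((x * u : (AF F)ˣ) : AF F) = (x : AF F) * (u : AF F) := rfl

lemma memK_of_unitsSub {m : Ideal (𝓞 F)} (hm : m ≠ ⊥) {x y u : (AF F)ˣ}
    (hx : MemKNat F m x) (hy : MemKNat F m y) (hu : u ∈ unitsSub F) (hyx : y = x * u) :
    MemK F m u := by
  have huint : ((u : AF F)) ∈ intSubring F := hu.1
  refine ⟨hu, huint, ?_⟩
  refine mem_congIdeal_of_forall hm _ (fun v => ?_)
  have hcoe : (((⟨((u : (AF F)ˣ) : AF F), huint⟩ : intSubring F) - 1 : intSubring F) : AF F) v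
      = (u : AF F) v - 1 := rfl
  rw [hcoe]
  have hyxv : (y : AF F) v = (x : AF F) v * (u : AF F) v := by
    rw [hyx, unit_coe_mul]; rfl
  by_cases hv : m ≤ v.asIdeal
  · obtain ⟨a, ham, ha⟩ := memKNat_sub_one_bound hx v
    obtain ⟨b, hbm, hb⟩ := memKNat_sub_one_bound hy v
    have hxv1 : Valued.v ((x : AF F) v) = 1 := memKNat_val_eq_one hx hv
    have hkey : Valued.v ((u : AF F) v - 1) = Valued.v ((y : AF F) v - (x : AF F) v) := by
      have hmul : (x : AF F) v * ((u : AF F) v - 1) = (y : AF F) v - (x : AF F) v := by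
        rw [hyxv]; ring
      rw [← hmul, Valuation.map_mul, hxv1, one_mul]
    have hsplit : (y : AF F) v - (x : AF F) v = ((y : AF F) v - 1) - ((x : AF F) v - 1) := by
      ring
    rcases le_total (Valued.v (algebraMap (𝓞 F) (v.adicCompletion F) a))
        (Valued.v (algebraMap (𝓞 F) (v.adicCompletion F) b)) with hab | hab
    · refine ⟨b, hbm, ?_⟩
      rw [hkey, hsplit]
      exact le_trans (Valuation.map_sub _ _ _) (max_le hb (le_trans ha hab))
    · refine ⟨a, ham, ?_⟩
      rw [hkey, hsplit]
      exact le_trans (Valuation.map_sub _ _ _) (max_le (le_trans hb hab) ha)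
  · obtain ⟨a, ham, ha1⟩ := exists_val_one_of_not_le hv
    refine ⟨a, ham, ?_⟩
    rw [val_algebraMap, ha1]
    refine le_trans (Valuation.map_sub _ _ _) (max_le (hu.1 v) ?_)
    rw [Valuation.map_one]

end Aux5
section Aux6
variable {F : Type} [Field F] [NumberField F]

open Multiplicative

lemma mulSupport_sub {n : HeightOneSpectrum (𝓞 F) → ℕ} (hfin : {v | n v ≠ 0}.Finite) :
    (Function.mulSupport fun v : HeightOneSpectrum (𝓞 F) => v.asIdeal ^ n v)
      ⊆ ↑hfin.toFinset := by
  intro w hw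
  rw [Function.mem_mulSupport] at hw
  simp only [Finset.coe_sort_coe, Set.Finite.coe_toFinset, Set.mem_setOf_eq]
  intro hh
  rw [hh, pow_zero] at hw
  exact hw rfl

lemma pow_dvd_finprod_pow {n : HeightOneSpectrum (𝓞 F) → ℕ} (hfin : {v | n v ≠ 0}.Finite)
    (v : HeightOneSpectrum (𝓞 F)) :
    v.asIdeal ^ n v ∣ ∏ᶠ w, w.asIdeal ^ n w := by
  by_cases h0 : n v = 0
  · rw [h0, pow_zero]; exact one_dvd _
  · rw [finprod_eq_prod_of_mulSupport_subset _ (mulSupport_sub hfin)]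
    exact Finset.dvd_prod_of_mem _ (by simp [Set.Finite.mem_toFinset, h0])

lemma finprod_pow_not_le {n : HeightOneSpectrum (𝓞 F) → ℕ} (hfin : {v | n v ≠ 0}.Finite)
    (v : HeightOneSpectrum (𝓞 F)) :
    ¬ (∏ᶠ w, w.asIdeal ^ n w) ≤ v.asIdeal ^ (n v + 1) := by
  classical
  intro hle
  rw [finprod_eq_prod_of_mulSupport_subset _ (mulSupport_sub hfin)] at hle
  set T := hfin.toFinset with hT
  have hprod : ∏ w ∈ T, w.asIdeal ^ n w
      = v.asIdeal ^ n v * ∏ w ∈ T.erase v, w.asIdeal ^ n w := by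
    by_cases hvT : v ∈ T
    · exact (Finset.mul_prod_erase T _ hvT).symm
    · rw [Finset.erase_eq_of_notMem hvT]
      have : n v = 0 := by
        by_contra hc
        exact hvT (by rw [hT]; exact hfin.mem_toFinset.mpr hc)
      rw [this, pow_zero, one_mul]
  rw [hprod] at hle
  have hdvd : v.asIdeal ^ n v * v.asIdeal ∣ v.asIdeal ^ n v * ∏ w ∈ T.erase v, w.asIdeal ^ n w := by
    rw [← pow_succ]
    exact Ideal.dvd_iff_le.mpr hle
  have hpow_ne : v.asIdeal ^ n v ≠ 0 := pow_ne_zero _ (by rw [Ideal.zero_eq_bot]; exact v.ne_bot)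
  have hdvd2 : v.asIdeal ∣ ∏ w ∈ T.erase v, w.asIdeal ^ n w :=
    (mul_dvd_mul_iff_left hpow_ne).mp hdvd
  have hle2 : ∏ w ∈ T.erase v, w.asIdeal ^ n w ≤ v.asIdeal := Ideal.le_of_dvd hdvd2
  obtain ⟨w, hwT, hwle⟩ := (Ideal.IsPrime.prod_le v.isPrime).mp hle2
  have hwv : w = v := by
    refine HOS.injective_asIdeal ?_
    have hle3 : w.asIdeal ≤ v.asIdeal := Ideal.IsPrime.le_of_pow_le hwle
    exact ((HeightOneSpectrum.isMaximal w).eq_of_le (Ideal.IsPrime.ne_top v.isPrime) hle3)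
  exact (Finset.ne_of_mem_erase hwT) hwv

lemma expo_unique {n k : HeightOneSpectrum (𝓞 F) → ℕ} (hfn : {v | n v ≠ 0}.Finite)
    (hfk : {v | k v ≠ 0}.Finite)
    (heq : (∏ᶠ w, w.asIdeal ^ n w) = ∏ᶠ w, w.asIdeal ^ k w)
    (v : HeightOneSpectrum (𝓞 F)) : n v = k v := by
  by_contra hne
  rcases Nat.lt_or_ge (n v) (k v) with hlt | hge
  · apply finprod_pow_not_le hfn v
    rw [heq]
    exact le_trans (Ideal.le_of_dvd (pow_dvd_finprod_pow hfk v))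
      (Ideal.pow_le_pow_right hlt)
  · have hlt : k v < n v := by omega
    apply finprod_pow_not_le hfk v
    rw [← heq]
    exact le_trans (Ideal.le_of_dvd (pow_dvd_finprod_pow hfn v))
      (Ideal.pow_le_pow_right hlt)

end Aux6
section Aux7
variable {F : Type} [Field F] [NumberField F]

open Multiplicative

lemma sup_eq_top_of_not_le {m : Ideal (𝓞 F)} {v : HeightOneSpectrum (𝓞 F)}
    (h : ¬ m ≤ v.asIdeal) : v.asIdeal ⊔ m = ⊤ := by
  by_contra hne
  have heq := (HeightOneSpectrum.isMaximal v).eq_of_le hne le_sup_left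
  exact h (le_trans le_sup_right heq.ge)

lemma ofAdd_neg_ne_one {e : ℕ} (he : e ≠ 0) :
    (((ofAdd (-(e : ℤ)) : Multiplicative ℤ)) : WithZero (Multiplicative ℤ)) ≠ 1 := by
  intro hc
  rw [← WithZero.coe_one, WithZero.coe_inj] at hc
  have := congrArg toAdd hc
  simp only [toAdd_ofAdd, toAdd_one] at this
  omega

lemma memKNat_not_le {m : Ideal (𝓞 F)} {x : (AF F)ˣ} (hx : MemKNat F m x)
    {v : HeightOneSpectrum (𝓞 F)} {e : ℕ}
    (hval : Valued.v ((x : AF F) v) =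
      (((ofAdd (-(e : ℤ)) : Multiplicative ℤ)) : WithZero (Multiplicative ℤ)))
    (he : e ≠ 0) : ¬ m ≤ v.asIdeal := by
  intro hle
  have h1 := memKNat_val_eq_one hx hle
  rw [hval] at h1
  exact ofAdd_neg_ne_one he h1

/-- Construction of the idele corresponding to an ideal coprime to m. -/
lemma exists_unit_of_ideal {m : Ideal (𝓞 F)} (hm : m ≠ ⊥) (J : Ideal (𝓞 F)) (hJ : J ≠ ⊥)
    (hJm : J ⊔ m = ⊤) : ∃ x : (AF F)ˣ, MemKNat F m x ∧ idealOf F (x : AF F) = J := by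
  classical
  set e : HeightOneSpectrum (𝓞 F) → ℕ := fun v =>
    (Associates.mk v.asIdeal).count (Associates.mk J).factors with he
  have hdvd_of_ne : ∀ v : HeightOneSpectrum (𝓞 F), e v ≠ 0 → v.asIdeal ∣ J := by
    intro v hv
    exact (Associates.count_ne_zero_iff_dvd hJ v.irreducible).mp hv
  have hefin : {v : HeightOneSpectrum (𝓞 F) | e v ≠ 0}.Finite := by
    refine Set.Finite.subset (Ideal.finite_factors hJ) (fun v hv => ?_)
    exact hdvd_of_ne v hv
  choose π hπ using fun v : HeightOneSpectrum (𝓞 F) => v.intValuation_exists_uniformizer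
  set xc : ∀ v : HeightOneSpectrum (𝓞 F), v.adicCompletion F := fun v =>
    (algebraMap (𝓞 F) (v.adicCompletion F) (π v)) ^ (e v) with hxc
  have halgval : ∀ v : HeightOneSpectrum (𝓞 F),
      Valued.v (algebraMap (𝓞 F) (v.adicCompletion F) (π v))
      = ((ofAdd (-1 : ℤ) : Multiplicative ℤ) : WithZero (Multiplicative ℤ)) := by
    intro v; rw [val_algebraMap, hπ]; rfl
  have hxcval : ∀ v : HeightOneSpectrum (𝓞 F), Valued.v (xc v)
      = ((ofAdd (-(e v : ℤ)) : Multiplicative ℤ) : WithZero (Multiplicative ℤ)) := by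
    intro v
    simp only [hxc]
    rw [Valuation.map_pow, halgval v, ← WithZero.coe_pow, WithZero.coe_inj, ← ofAdd_nsmul]
    congr 1
    simp
  have halgne : ∀ v : HeightOneSpectrum (𝓞 F),
      algebraMap (𝓞 F) (v.adicCompletion F) (π v) ≠ 0 := by
    intro v hc
    have h2 := halgval v
    rw [hc, Valuation.map_zero] at h2
    exact WithZero.zero_ne_coe h2
  have hxint : ∀ v : HeightOneSpectrum (𝓞 F), Valued.v (xc v) ≤ 1 := by
    intro v
    rw [hxcval v, ← WithZero.coe_one, WithZero.coe_le_coe, ← ofAdd_zero]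
    exact Multiplicative.ofAdd_le.mpr (by omega)
  have hxfin : ∀ᶠ v in Filter.cofinite, xc v ∈ v.adicCompletionIntegers F := by
    rw [Filter.eventually_cofinite]
    have hempty : {v : HeightOneSpectrum (𝓞 F) | xc v ∉ v.adicCompletionIntegers F} = ∅ := by
      ext v
      simp only [Set.mem_setOf_eq, Set.mem_empty_iff_false, iff_false, not_not]
      exact (mem_adicCompletionIntegers (𝓞 F) F v).mpr (hxint v)
    rw [hempty]; exact Set.finite_empty
  set yc : ∀ v : HeightOneSpectrum (𝓞 F), v.adicCompletion F := fun v =>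
    ((algebraMap (𝓞 F) (v.adicCompletion F) (π v))⁻¹) ^ (e v) with hyc
  have hycfin : ∀ᶠ v in Filter.cofinite, yc v ∈ v.adicCompletionIntegers F := by
    rw [Filter.eventually_cofinite]
    refine Set.Finite.subset hefin (fun v hv => ?_)
    simp only [Set.mem_setOf_eq] at hv ⊢
    intro hez
    apply hv
    simp only [hyc]
    rw [hez, pow_zero]
    exact one_mem _
  set xf : AF F := ⟨xc, hxfin⟩ with hxf
  set yf : AF F := ⟨yc, hycfin⟩ with hyf
  have hxy : xf * yf = 1 := by
    apply FiniteAdeleRing.ext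
    intro v
    show xc v * yc v = 1
    simp only [hxc, hyc]
    rw [← mul_pow, mul_inv_cancel₀ (halgne v), one_pow]
  set x : (AF F)ˣ := ⟨xf, yf, hxy, by rw [mul_comm]; exact hxy⟩ with hx
  have hxapp : ∀ v : HeightOneSpectrum (𝓞 F), (x : AF F) v = xc v := fun v => rfl
  have hxval : ∀ v : HeightOneSpectrum (𝓞 F), Valued.v ((x : AF F) v)
      = ((ofAdd (-(e v : ℤ)) : Multiplicative ℤ) : WithZero (Multiplicative ℤ)) := by
    intro v; rw [hxapp v, hxcval v]
  have hid : idealOf F (x : AF F) = J := by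
    rw [idealOf_eq_finprod hefin hxval]
    have hfac := Ideal.finprod_heightOneSpectrum_factorization
      (show J ≠ 0 by rwa [Ideal.zero_eq_bot])
    rw [← hfac]
    rfl
  have hint : ((x : AF F)) ∈ intSubring F := by
    intro v
    exact (mem_adicCompletionIntegers (𝓞 F) F v).mpr (by rw [hxapp v]; exact hxint v)
  refine ⟨x, ⟨hint, ?_⟩, hid⟩
  refine mem_congIdeal_of_forall hm _ (fun v => ?_)
  have hcoe : (((⟨((x : (AF F)ˣ) : AF F), hint⟩ : intSubring F) - 1 : intSubring F) : AF F) v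
      = (x : AF F) v - 1 := rfl
  rw [hcoe]
  by_cases hev : e v = 0
  · refine ⟨0, zero_mem m, ?_⟩
    have hone : (x : AF F) v = 1 := by
      rw [hxapp v]; simp only [hxc]; rw [hev, pow_zero]
    rw [hone, sub_self, Valuation.map_zero]
    exact zero_le'
  · have hnotle : ¬ m ≤ v.asIdeal := by
      intro hle
      have hJle : J ≤ v.asIdeal := Ideal.le_of_dvd (hdvd_of_ne v hev)
      have : (⊤ : Ideal (𝓞 F)) ≤ v.asIdeal := by
        rw [← hJm]; exact sup_le hJle hle
      exact v.isPrime.ne_top (top_le_iff.mp this)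
    obtain ⟨a, ham, ha1⟩ := exists_val_one_of_not_le hnotle
    refine ⟨a, ham, ?_⟩
    rw [val_algebraMap, ha1]
    refine le_trans (Valuation.map_sub _ _ _) (max_le ?_ ?_)
    · rw [hxapp v]; exact hxint v
    · rw [Valuation.map_one]

end Aux7
/-- For a nonzero ideal m of O_F, x ↦ I(x) induces a monoid isomorphism from K(m)\K^♮(m)
onto the monoid of nonzero ideals of O_F coprime to m; in particular the induced map
K(m)\K^♮(m) → Ô_F^×\Ô_F^♮ is injective. -/
theorem rayClass_monoid_iso (m : Ideal (𝓞 F)) (hm : m ≠ ⊥) :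
    (∀ x : (AF F)ˣ, MemKNat F m x →
      idealOf F (x : AF F) ≠ ⊥ ∧ idealOf F (x : AF F) ⊔ m = ⊤) ∧
    (∀ x y : (AF F)ˣ, MemKNat F m x → MemKNat F m y →
      idealOf F ((x * y : (AF F)ˣ) : AF F) = idealOf F (x : AF F) * idealOf F (y : AF F)) ∧
    (∀ x y : (AF F)ˣ, MemKNat F m x → MemKNat F m y →
      (idealOf F (x : AF F) = idealOf F (y : AF F) ↔ ∃ u, MemK F m u ∧ y = x * u)) ∧
    (∀ J : Ideal (𝓞 F), J ≠ ⊥ → J ⊔ m = ⊤ →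
      ∃ x : (AF F)ˣ, MemKNat F m x ∧ idealOf F (x : AF F) = J) ∧
    (∀ x y : (AF F)ˣ, MemKNat F m x → MemKNat F m y →
      (∃ u ∈ unitsSub F, y = x * u) → ∃ u, MemK F m u ∧ y = x * u) := by
  classical
  have part5 : ∀ x y : (AF F)ˣ, MemKNat F m x → MemKNat F m y →
      (∃ u ∈ unitsSub F, y = x * u) → ∃ u, MemK F m u ∧ y = x * u := by
    rintro x y hx hy ⟨u, hu, hyx⟩
    exact ⟨u, memK_of_unitsSub hm hx hy hu hyx, hyx⟩
  refine ⟨?_, ?_, ?_, ?_, part5⟩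
  · intro x hx
    obtain ⟨hint, hcong⟩ := hx
    have hx : MemKNat F m x := ⟨hint, hcong⟩
    obtain ⟨n, hval, hfin⟩ := exists_expo hint
    rw [idealOf_eq_finprod hfin hval]
    refine ⟨finprod_ne_bot hfin, ?_⟩
    have hcop : IsCoprime (∏ᶠ v, v.asIdeal ^ n v) m := by
      rw [finprod_eq_prod_of_mulSupport_subset _ (mulSupport_sub hfin)]
      refine IsCoprime.prod_left (fun v hv => ?_)
      have hnv : n v ≠ 0 := hfin.mem_toFinset.mp hv
      have hnotle : ¬ m ≤ v.asIdeal := memKNat_not_le hx (hval v) hnv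
      exact (Ideal.isCoprime_iff_sup_eq.mpr (sup_eq_top_of_not_le hnotle)).pow_left
    exact hcop.sup_eq
  · intro x y hx hy
    obtain ⟨hxint, hxc⟩ := hx
    obtain ⟨hyint, hyc⟩ := hy
    obtain ⟨n, hvx, hfx⟩ := exists_expo hxint
    obtain ⟨k, hvy, hfy⟩ := exists_expo hyint
    have hvxy : ∀ v, Valued.v (((x * y : (AF F)ˣ) : AF F) v)
        = ((Multiplicative.ofAdd (-((n v + k v : ℕ) : ℤ)) : Multiplicative ℤ) :
            WithZero (Multiplicative ℤ)) := by
      intro v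
      have happ : ((x * y : (AF F)ˣ) : AF F) v = (x : AF F) v * (y : AF F) v := rfl
      rw [happ, Valuation.map_mul, hvx v, hvy v, ← WithZero.coe_mul, WithZero.coe_inj,
        ← ofAdd_add]
      congr 1
      push_cast
      ring
    have hfxy : {v | (fun v => n v + k v) v ≠ 0}.Finite := by
      refine Set.Finite.subset (hfx.union hfy) (fun v hv => ?_)
      simp only [Set.mem_setOf_eq, Set.mem_union] at hv ⊢
      omega
    rw [idealOf_eq_finprod hfxy hvxy, idealOf_eq_finprod hfx hvx, idealOf_eq_finprod hfy hvy,
      ← finprod_mul_distrib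
        (Set.Finite.subset hfx.toFinset.finite_toSet (mulSupport_sub hfx))
        (Set.Finite.subset hfy.toFinset.finite_toSet (mulSupport_sub hfy))]
    exact finprod_congr (fun v => pow_add _ _ _)
  · intro x y hx hy
    obtain ⟨hxint, hxc⟩ := hx
    have hx : MemKNat F m x := ⟨hxint, hxc⟩
    obtain ⟨hyint, hyc⟩ := hy
    have hy : MemKNat F m y := ⟨hyint, hyc⟩
    constructor
    · intro heq
      obtain ⟨n, hvx, hfx⟩ := exists_expo hxint
      obtain ⟨k, hvy, hfy⟩ := exists_expo hyint
      have hnk : ∀ v, n v = k v := by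
        refine expo_unique hfx hfy ?_
        rw [← idealOf_eq_finprod hfx hvx, ← idealOf_eq_finprod hfy hvy]
        exact heq
      have hvaleq : ∀ v, Valued.v ((x : AF F) v) = Valued.v ((y : AF F) v) := by
        intro v; rw [hvx v, hvy v, hnk v]
      set u : (AF F)ˣ := x⁻¹ * y with hu
      have hyxu : y = x * u := by rw [hu, mul_inv_cancel_left]
      have huval : ∀ v, Valued.v ((u : AF F) v) = 1 := by
        intro v
        have happ : (y : AF F) v = (x : AF F) v * (u : AF F) v := by
          rw [hyxu]; rfl
        have hmv : Valued.v ((x : AF F) v) * Valued.v ((u : AF F) v)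
            = Valued.v ((x : AF F) v) * 1 := by
          rw [mul_one, ← Valuation.map_mul, ← happ, ← hvaleq v]
        exact mul_left_cancel₀ (unit_val_ne_zero x v) hmv
      have humem : u ∈ unitsSub F := val_eq_one_mem_unitsSub huval
      exact ⟨u, memK_of_unitsSub hm hx hy humem hyxu, hyxu⟩
    · rintro ⟨u, hu, rfl⟩
      ext a
      rw [mem_idealOf_iff, mem_idealOf_iff]
      refine forall_congr' (fun v => ?_)
      have happ : ((x * u : (AF F)ˣ) : AF F) v = (x : AF F) v * (u : AF F) v := rfl
      rw [happ, Valuation.map_mul, unitsSub_val_eq_one hu.1 v, mul_one]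
  · intro J hJ hJm
    exact exists_unit_of_ideal hm J hJ hJm
end
end
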